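/- Let θ₁, θ₂ ∈ [0, 2π). Suppose Ψ = (ψ_{ς₀ς₁ς₂}) is C¹ on [0,∞) × closure(S₁), satisfies the equal-time evolution equations on (0,∞) × S₁ and the exact boundary conditions ψ_{(−1)(+1)ς₂} = e^{iθ₁} ψ_{(+1)(−1)ς₂} on C₁ (for ς₂ = ±1) and ψ_{(+1)ς₁(−1)} = e^{iθ₂} ψ_{(−1)ς₁(+1)} on C₂ (for ς₁ = ±1), and for every bounded time interval has compact spatial support. Then the total probability is conserved: for all t ≥ 0, ∫_{S₁} |Ψ(t, ·)|² = ∫_{S₁} |Ψ(0, ·)|², where |Ψ|² := Σ_{ς₀,ς₁,ς₂} |ψ_{ς₀ς₁ς₂}|². -/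

import Mathlib

open Complex MeasureTheory

noncomputable section

/-- Partial derivative (in coordinate `i`) of a complex-valued function on `ℝⁿ`. -/
def pdC {n : ℕ} (i : Fin n) (f : (Fin n → ℝ) → ℂ) (x : Fin n → ℝ) : ℂ :=
  fderiv ℝ f x (Pi.single i 1)

/-- The spatial domain `S₁ = {(s_ph, s_e1, s_e2) : s_e1 < s_ph < s_e2}`;
coordinates are `p 0 = s_ph`, `p 1 = s_e1`, `p 2 = s_e2`. -/
def S1 : Set (Fin 3 → ℝ) := {p | p 1 < p 0 ∧ p 0 < p 2}

/-- Spacetime point `(t, s_ph, s_e1, s_e2)` from a time `t` and spatial point `p`. -/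
def pt (t : ℝ) (p : Fin 3 → ℝ) : Fin 4 → ℝ := ![t, p 0, p 1, p 2]

/-- The spatial part of a spacetime point. -/
def sp (x : Fin 4 → ℝ) : Fin 3 → ℝ := ![x 1, x 2, x 3]

/-- The probability density `Σ_{ς₀,ς₁,ς₂} |ψ_{ς₀ς₁ς₂}|²` at time `t`, spatial point `p`. -/
def totD (ψ : ℝ → ℝ → ℝ → (Fin 4 → ℝ) → ℂ) (t : ℝ) (p : Fin 3 → ℝ) : ℝ :=
  ∑ ς₀ ∈ ({-1, 1} : Finset ℝ), ∑ ς₁ ∈ ({-1, 1} : Finset ℝ), ∑ ς₂ ∈ ({-1, 1} : Finset ℝ),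
    ‖ψ ς₀ ς₁ ς₂ (pt t p)‖ ^ 2

/-! ### change of variables -/
def Lmat : Matrix (Fin 3) (Fin 3) ℝ := !![0,0,1;(-1),0,1;0,1,1]
def Nmat : Matrix (Fin 3) (Fin 3) ℝ := !![1,-1,0;(-1),0,1;1,0,0]
def Lcov : (Fin 3 → ℝ) →ₗ[ℝ] (Fin 3 → ℝ) := Matrix.toLin' Lmat
lemma Lcov_apply (q : Fin 3 → ℝ) : Lcov q = ![q 2, q 2 - q 0, q 2 + q 1] := by
  funext i
  fin_cases i <;>
    simp [Lcov, Lmat, Matrix.toLin'_apply, Matrix.mulVec, dotProduct,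
      Fin.sum_univ_three] <;> ring
lemma Ldet : LinearMap.det Lcov = -1 := by
  rw [Lcov, ← LinearMap.det_toMatrix' ]
  simp [Matrix.det_fin_three, Lmat]
lemma Lmp : MeasurePreserving Lcov := by
  constructor
  · exact (LinearMap.continuous_of_finiteDimensional Lcov).measurable
  · rw [Real.map_linearMap_volume_pi_eq_smul_volume_pi (by rw [Ldet]; norm_num)]
    rw [Ldet]; norm_num
def LcovE : (Fin 3 → ℝ) ≃ₗ[ℝ] (Fin 3 → ℝ) :=
  LinearEquiv.ofLinear Lcov (Matrix.toLin' Nmat)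
    (LinearMap.ext fun q => by
      funext i
      fin_cases i <;>
        simp [Lcov, Lmat, Nmat, Matrix.toLin'_apply, Matrix.mulVec, dotProduct,
          Fin.sum_univ_three])
    (LinearMap.ext fun q => by
      funext i
      fin_cases i <;>
        simp [Lcov, Lmat, Nmat, Matrix.toLin'_apply, Matrix.mulVec, dotProduct,
          Fin.sum_univ_three])
lemma Lemb : MeasurableEmbedding (Lcov : (Fin 3 → ℝ) → (Fin 3 → ℝ)) := by
  have : (Lcov : (Fin 3 → ℝ) → (Fin 3 → ℝ)) = LcovE.toContinuousLinearEquiv.toHomeomorph := rfl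
  rw [this]
  exact LcovE.toContinuousLinearEquiv.toHomeomorph.measurableEmbedding

lemma mem_closure_S1 {p : Fin 3 → ℝ} (h1 : p 1 ≤ p 0) (h2 : p 0 ≤ p 2) : p ∈ closure S1 := by
  have ht : Filter.Tendsto (fun n : ℕ => p + (1 / (n+1) : ℝ) • ![0,-1,1]) Filter.atTop (nhds p) := by
    have h2 := (tendsto_one_div_add_atTop_nhds_zero_nat (𝕜 := ℝ)).smul_const (![0,-1,1] : Fin 3 → ℝ)
    have h3 := (tendsto_const_nhds (x := p) (f := Filter.atTop (α := ℕ))).add h2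
    simpa using h3
  refine mem_closure_of_tendsto ht (Filter.Eventually.of_forall fun n => ?_)
  have hp : (0:ℝ) < ((n:ℝ)+1)⁻¹ := by positivity
  constructor <;> simp [S1] <;> linarith

/-! ### spacetime change of variables -/
open ContinuousLinearMap in
def Phi : (Fin 4 → ℝ) →L[ℝ] (Fin 4 → ℝ) :=
  ContinuousLinearMap.pi
    ![(proj 0 : (Fin 4 → ℝ) →L[ℝ] ℝ), (proj 3 : (Fin 4 → ℝ) →L[ℝ] ℝ),
      (proj 3 : (Fin 4 → ℝ) →L[ℝ] ℝ) - (proj 1 : (Fin 4 → ℝ) →L[ℝ] ℝ),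
      (proj 3 : (Fin 4 → ℝ) →L[ℝ] ℝ) + (proj 2 : (Fin 4 → ℝ) →L[ℝ] ℝ)]
lemma Phi_apply (z : Fin 4 → ℝ) : Phi z = ![z 0, z 3, z 3 - z 1, z 3 + z 2] := by
  funext i; fin_cases i <;> simp [Phi]
lemma Phi_single0 : Phi (Pi.single (0 : Fin 4) 1) = Pi.single (0 : Fin 4) 1 := by
  funext j; rw [Phi_apply]; fin_cases j <;> simp [Pi.single_apply]
lemma Phi_single1 : Phi (Pi.single (1 : Fin 4) 1) = -Pi.single (2 : Fin 4) 1 := by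
  funext j; rw [Phi_apply]; fin_cases j <;> simp [Pi.single_apply]
lemma Phi_single2 : Phi (Pi.single (2 : Fin 4) 1) = Pi.single (3 : Fin 4) 1 := by
  funext j; rw [Phi_apply]; fin_cases j <;> simp [Pi.single_apply]
lemma Phi_single3 : Phi (Pi.single (3 : Fin 4) 1) =
    Pi.single (1 : Fin 4) 1 + Pi.single (2 : Fin 4) 1 + Pi.single (3 : Fin 4) 1 := by
  funext j; rw [Phi_apply]; fin_cases j <;> simp [Pi.single_apply]

/-! ### the flux vector field -/
def signsF : Finset ℝ := {-1, 1}
lemma sum_signs (f : ℝ → ℝ) : ∑ s ∈ signsF, f s = f (-1) + f 1 :=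
  Finset.sum_pair (by norm_num)
lemma mem_signsS {s : ℝ} (h : s ∈ signsF) : s ∈ ({-1, 1} : Set ℝ) := by
  simpa [signsF] using h
def cf (ς₀ ς₁ ς₂ : ℝ) : Fin 4 → ℝ := ![1, ς₁ - ς₀, ς₀ - ς₂, -ς₀]
lemma cf0 (a b c : ℝ) : cf a b c 0 = 1 := by simp [cf]
lemma cf1 (a b c : ℝ) : cf a b c 1 = b - a := by simp [cf]
lemma cf2 (a b c : ℝ) : cf a b c 2 = a - c := by simp [cf]
lemma cf3 (a b c : ℝ) : cf a b c 3 = -a := by simp [cf]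

def Fv (ψ : ℝ → ℝ → ℝ → (Fin 4 → ℝ) → ℂ) (x : Fin 4 → ℝ) : Fin 4 → ℝ :=
  fun i => ∑ ς₀ ∈ signsF, ∑ ς₁ ∈ signsF, ∑ ς₂ ∈ signsF,
    cf ς₀ ς₁ ς₂ i * ‖ψ ς₀ ς₁ ς₂ (Phi x)‖ ^ 2
def Dr (ψ : ℝ → ℝ → ℝ → (Fin 4 → ℝ) → ℂ) (ς₀ ς₁ ς₂ : ℝ) (x : Fin 4 → ℝ) :
    (Fin 4 → ℝ) →L[ℝ] ℝ :=
  (2:ℝ) • (Complex.reCLM.comp (((ContinuousLinearMap.mul ℝ ℂ)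
    ((starRingEnd ℂ) (ψ ς₀ ς₁ ς₂ (Phi x)))).comp
      ((fderiv ℝ (ψ ς₀ ς₁ ς₂) (Phi x)).comp (Phi : (Fin 4 → ℝ) →L[ℝ] (Fin 4 → ℝ)))))
lemma Dr_apply (ψ : ℝ → ℝ → ℝ → (Fin 4 → ℝ) → ℂ) (ς₀ ς₁ ς₂ : ℝ) (x v : Fin 4 → ℝ) :
    Dr ψ ς₀ ς₁ ς₂ x v = 2 * ((starRingEnd ℂ) (ψ ς₀ ς₁ ς₂ (Phi x))
      * fderiv ℝ (ψ ς₀ ς₁ ς₂) (Phi x) (Phi v)).re := by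
  simp [Dr, ContinuousLinearMap.smul_apply, ContinuousLinearMap.comp_apply,
    ContinuousLinearMap.mul_apply']
def Fd (ψ : ℝ → ℝ → ℝ → (Fin 4 → ℝ) → ℂ) (x : Fin 4 → ℝ) :
    (Fin 4 → ℝ) →L[ℝ] (Fin 4 → ℝ) :=
  ContinuousLinearMap.pi (fun i => ∑ ς₀ ∈ signsF, ∑ ς₁ ∈ signsF, ∑ ς₂ ∈ signsF,
    cf ς₀ ς₁ ς₂ i • Dr ψ ς₀ ς₁ ς₂ x)

lemma hasFDerivAt_normSq {E : Type*} [NormedAddCommGroup E] [NormedSpace ℝ E]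
    {g : E → ℂ} {g' : E →L[ℝ] ℂ} {x : E} (hg : HasFDerivAt g g' x) :
    HasFDerivAt (fun y => ‖g y‖ ^ 2)
      ((2:ℝ) • (Complex.reCLM.comp (((ContinuousLinearMap.mul ℝ ℂ)
        ((starRingEnd ℂ) (g x))).comp g'))) x := by
  have hconj : HasFDerivAt (fun y => (starRingEnd ℂ) (g y))
      ((Complex.conjCLE : ℂ ≃L[ℝ] ℂ).toContinuousLinearMap.comp g') x :=
    (Complex.conjCLE.toContinuousLinearMap.hasFDerivAt).comp x hg
  have hmul := hconj.mul hg
  have hre := (Complex.reCLM.hasFDerivAt).comp x hmul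
  have heq : (fun y => ‖g y‖ ^ 2) = fun y => Complex.reCLM ((starRingEnd ℂ) (g y) * g y) := by
    funext y
    have h1 : ((starRingEnd ℂ) (g y) * g y) = ((Complex.normSq (g y) : ℝ) : ℂ) :=
      (Complex.normSq_eq_conj_mul_self).symm
    simp [h1, Complex.sq_norm]
  rw [heq]
  refine hre.congr_fderiv ?_
  ext h
  simp only [ContinuousLinearMap.smul_apply, ContinuousLinearMap.comp_apply,
    ContinuousLinearMap.add_apply, Complex.reCLM_apply, Function.comp,
    ContinuousLinearMap.mul_apply', ContinuousLinearEquiv.coe_coe, Complex.conjCLE_apply,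
    smul_eq_mul, Complex.mul_re, Complex.conj_re, Complex.conj_im, Complex.add_re]
  ring

lemma hasFDerivAt_Fv (ψ : ℝ → ℝ → ℝ → (Fin 4 → ℝ) → ℂ) (x : Fin 4 → ℝ)
    (hd : ∀ ς₀ ∈ ({-1, 1} : Set ℝ), ∀ ς₁ ∈ ({-1, 1} : Set ℝ), ∀ ς₂ ∈ ({-1, 1} : Set ℝ),
      DifferentiableAt ℝ (ψ ς₀ ς₁ ς₂) (Phi x)) :
    HasFDerivAt (Fv ψ) (Fd ψ x) x := by
  apply hasFDerivAt_pi''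
  intro i
  have hproj : (ContinuousLinearMap.proj i).comp (Fd ψ x)
      = ∑ ς₀ ∈ signsF, ∑ ς₁ ∈ signsF, ∑ ς₂ ∈ signsF, cf ς₀ ς₁ ς₂ i • Dr ψ ς₀ ς₁ ς₂ x := by
    simp only [Fd, ContinuousLinearMap.proj_pi]
  rw [hproj]
  apply HasFDerivAt.fun_sum; intro ς₀ h₀
  apply HasFDerivAt.fun_sum; intro ς₁ h₁
  apply HasFDerivAt.fun_sum; intro ς₂ h₂
  have hg : HasFDerivAt (fun y => ψ ς₀ ς₁ ς₂ (Phi y))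
      ((fderiv ℝ (ψ ς₀ ς₁ ς₂) (Phi x)).comp (Phi : (Fin 4 → ℝ) →L[ℝ] (Fin 4 → ℝ))) x :=
    ((hd ς₀ (mem_signsS h₀) ς₁ (mem_signsS h₁) ς₂ (mem_signsS h₂)).hasFDerivAt).comp x
      Phi.hasFDerivAt
  have := (hasFDerivAt_normSq hg).const_mul (cf ς₀ ς₁ ς₂ i)
  exact this

lemma keylem (ς₀ ς₁ ς₂ ω : ℝ) (D : (Fin 4 → ℝ) →L[ℝ] ℂ) (a f1 f2 : ℂ)
    (hpde : D (Pi.single 0 1) - (ς₀ : ℂ) * D (Pi.single 1 1) - (ς₁ : ℂ) * D (Pi.single 2 1)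
      - (ς₂ : ℂ) * D (Pi.single 3 1) + Complex.I * (ω : ℂ) * f1 + Complex.I * (ω : ℂ) * f2 = 0) :
    1 * (2 * (a * D (Phi (Pi.single 0 1))).re) + (ς₁ - ς₀) * (2 * (a * D (Phi (Pi.single 1 1))).re)
    + (ς₀ - ς₂) * (2 * (a * D (Phi (Pi.single 2 1))).re)
    + (-ς₀) * (2 * (a * D (Phi (Pi.single 3 1))).re)
    = -(2 * (a * (Complex.I * (ω : ℂ) * f1)).re) - 2 * (a * (Complex.I * (ω : ℂ) * f2)).re := by
  rw [Phi_single0, Phi_single1, Phi_single2, Phi_single3, map_neg, map_add, map_add]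
  have hc : a * (D (Pi.single 0 1)) - (ς₀:ℂ) * (a * D (Pi.single 1 1))
      - (ς₁:ℂ) * (a * D (Pi.single 2 1)) - (ς₂:ℂ) * (a * D (Pi.single 3 1))
      = -(a * (Complex.I * (ω:ℂ) * f1)) - (a * (Complex.I * (ω:ℂ) * f2)) := by
    linear_combination a * hpde
  have hre := congrArg Complex.re hc
  simp only [Complex.sub_re, Complex.neg_re, Complex.add_re, Complex.re_ofReal_mul] at hre
  simp only [mul_neg, Complex.neg_re, mul_add, Complex.add_re]
  linarith
lemma masscancel (ω : ℝ) (u v : ℂ) :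
    ((starRingEnd ℂ) u * (Complex.I * (ω : ℂ) * v)).re
      + ((starRingEnd ℂ) v * (Complex.I * (ω : ℂ) * u)).re = 0 := by
  simp [Complex.mul_re, Complex.mul_im, Complex.conj_re, Complex.conj_im]
  ring

lemma divg_zero (ψ : ℝ → ℝ → ℝ → (Fin 4 → ℝ) → ℂ) (ω : ℝ) (x : Fin 4 → ℝ)
    (hpde : ∀ ς₀ ∈ ({-1, 1} : Set ℝ), ∀ ς₁ ∈ ({-1, 1} : Set ℝ), ∀ ς₂ ∈ ({-1, 1} : Set ℝ),
      fderiv ℝ (ψ ς₀ ς₁ ς₂) (Phi x) (Pi.single 0 1)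
        - (ς₀ : ℂ) * fderiv ℝ (ψ ς₀ ς₁ ς₂) (Phi x) (Pi.single 1 1)
        - (ς₁ : ℂ) * fderiv ℝ (ψ ς₀ ς₁ ς₂) (Phi x) (Pi.single 2 1)
        - (ς₂ : ℂ) * fderiv ℝ (ψ ς₀ ς₁ ς₂) (Phi x) (Pi.single 3 1)
        + Complex.I * (ω : ℂ) * ψ ς₀ (-ς₁) ς₂ (Phi x)
        + Complex.I * (ω : ℂ) * ψ ς₀ ς₁ (-ς₂) (Phi x) = 0) :
    ∑ i : Fin 4, Fd ψ x (Pi.single i 1) i = 0 := by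
  have hm : ∀ s : ℝ, s ∈ ({-1,1} : Finset ℝ) → s ∈ ({-1,1} : Set ℝ) := fun s hs => by
    simpa using hs
  have hmn : (-1 : ℝ) ∈ ({-1,1} : Set ℝ) := by norm_num
  have hmp : (1 : ℝ) ∈ ({-1,1} : Set ℝ) := by norm_num
  -- the eight key identities
  have k : ∀ a ∈ ({-1,1} : Set ℝ), ∀ b ∈ ({-1,1} : Set ℝ), ∀ c ∈ ({-1,1} : Set ℝ),
      1 * (2 * ((starRingEnd ℂ) (ψ a b c (Phi x)) * fderiv ℝ (ψ a b c) (Phi x) (Phi (Pi.single 0 1))).re)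
      + (b - a) * (2 * ((starRingEnd ℂ) (ψ a b c (Phi x)) * fderiv ℝ (ψ a b c) (Phi x) (Phi (Pi.single 1 1))).re)
      + (a - c) * (2 * ((starRingEnd ℂ) (ψ a b c (Phi x)) * fderiv ℝ (ψ a b c) (Phi x) (Phi (Pi.single 2 1))).re)
      + (-a) * (2 * ((starRingEnd ℂ) (ψ a b c (Phi x)) * fderiv ℝ (ψ a b c) (Phi x) (Phi (Pi.single 3 1))).re)
      = -(2 * ((starRingEnd ℂ) (ψ a b c (Phi x)) * (Complex.I * (ω : ℂ) * ψ a (-b) c (Phi x))).re)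
        - 2 * ((starRingEnd ℂ) (ψ a b c (Phi x)) * (Complex.I * (ω : ℂ) * ψ a b (-c) (Phi x))).re :=
    fun a ha b hb c hc =>
      keylem a b c ω (fderiv ℝ (ψ a b c) (Phi x)) ((starRingEnd ℂ) (ψ a b c (Phi x)))
        (ψ a (-b) c (Phi x)) (ψ a b (-c) (Phi x)) (hpde a ha b hb c hc)
  have k1 := k (-1) hmn (-1) hmn (-1) hmn
  have k2 := k (-1) hmn (-1) hmn 1 hmp
  have k3 := k (-1) hmn 1 hmp (-1) hmn
  have k4 := k (-1) hmn 1 hmp 1 hmp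
  have k5 := k 1 hmp (-1) hmn (-1) hmn
  have k6 := k 1 hmp (-1) hmn 1 hmp
  have k7 := k 1 hmp 1 hmp (-1) hmn
  have k8 := k 1 hmp 1 hmp 1 hmp
  simp only [neg_neg] at k1 k2 k3 k4 k5 k6 k7 k8
  -- the eight mass-term cancellations
  have m1 := masscancel ω (ψ (-1) (-1) (-1) (Phi x)) (ψ (-1) 1 (-1) (Phi x))
  have m2 := masscancel ω (ψ (-1) (-1) 1 (Phi x)) (ψ (-1) 1 1 (Phi x))
  have m3 := masscancel ω (ψ 1 (-1) (-1) (Phi x)) (ψ 1 1 (-1) (Phi x))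
  have m4 := masscancel ω (ψ 1 (-1) 1 (Phi x)) (ψ 1 1 1 (Phi x))
  have m5 := masscancel ω (ψ (-1) (-1) (-1) (Phi x)) (ψ (-1) (-1) 1 (Phi x))
  have m6 := masscancel ω (ψ (-1) 1 (-1) (Phi x)) (ψ (-1) 1 1 (Phi x))
  have m7 := masscancel ω (ψ 1 (-1) (-1) (Phi x)) (ψ 1 (-1) 1 (Phi x))
  have m8 := masscancel ω (ψ 1 1 (-1) (Phi x)) (ψ 1 1 1 (Phi x))
  simp only [Fin.sum_univ_four, Fd, ContinuousLinearMap.pi_apply,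
    ContinuousLinearMap.sum_apply, ContinuousLinearMap.smul_apply, smul_eq_mul,
    sum_signs, Dr_apply, cf0, cf1, cf2, cf3]
  linarith [k1, k2, k3, k4, k5, k6, k7, k8, m1, m2, m3, m4, m5, m6, m7, m8]

lemma ins0_apply (r : ℝ) (y : Fin 3 → ℝ) :
    Fin.insertNth (0:Fin 4) r y = ![r, y 0, y 1, y 2] := by
  funext j; fin_cases j <;> simp [Fin.insertNth, Fin.succAboveCases] <;> rfl
lemma ins1_apply (r : ℝ) (y : Fin 3 → ℝ) :
    Fin.insertNth (1:Fin 4) r y = ![y 0, r, y 1, y 2] := by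
  funext j; fin_cases j <;> simp [Fin.insertNth, Fin.succAboveCases] <;> rfl
lemma ins2_apply (r : ℝ) (y : Fin 3 → ℝ) :
    Fin.insertNth (2:Fin 4) r y = ![y 0, y 1, r, y 2] := by
  funext j; fin_cases j <;> simp [Fin.insertNth, Fin.succAboveCases] <;> rfl
lemma ins3_apply (r : ℝ) (y : Fin 3 → ℝ) :
    Fin.insertNth (3:Fin 4) r y = ![y 0, y 1, y 2, r] := by
  funext j; fin_cases j <;> simp [Fin.insertNth, Fin.succAboveCases] <;> rfl

lemma PhiIns0 (r : ℝ) (y : Fin 3 → ℝ) :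
    Phi (Fin.insertNth (0:Fin 4) r y) = pt r (Lcov y) := by
  rw [ins0_apply, Phi_apply, pt, Lcov_apply]
  funext j; fin_cases j <;> simp
lemma PhiIns1 (r : ℝ) (y : Fin 3 → ℝ) :
    Phi (Fin.insertNth (1:Fin 4) r y) = pt (y 0) (Lcov ![r, y 1, y 2]) := by
  rw [ins1_apply, Phi_apply, pt, Lcov_apply]
  funext j; fin_cases j <;> simp
lemma PhiIns2 (r : ℝ) (y : Fin 3 → ℝ) :
    Phi (Fin.insertNth (2:Fin 4) r y) = pt (y 0) (Lcov ![y 1, r, y 2]) := by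
  rw [ins2_apply, Phi_apply, pt, Lcov_apply]
  funext j; fin_cases j <;> simp
lemma PhiIns3 (r : ℝ) (y : Fin 3 → ℝ) :
    Phi (Fin.insertNth (3:Fin 4) r y) = pt (y 0) (Lcov ![y 1, y 2, r]) := by
  rw [ins3_apply, Phi_apply, pt, Lcov_apply]
  funext j; fin_cases j <;> simp

lemma Fv_face0 (ψ : ℝ → ℝ → ℝ → (Fin 4 → ℝ) → ℂ) (τ : ℝ) (y : Fin 3 → ℝ) :
    Fv ψ (Fin.insertNth (0:Fin 4) τ y) 0 = totD ψ τ (Lcov y) := by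
  simp only [Fv, totD, signsF, cf0, one_mul, PhiIns0]


/-- For a `C¹` solution of the equal-time evolution equations with the
exact boundary conditions and compact spatial support, the total probability in `S₁`
is conserved. -/
theorem exact_probability_conservation
    (hbar m_e ω : ℝ) (hhbar : 0 < hbar) (hm : 0 ≤ m_e) (hω : ω = m_e / hbar)
    (θ₁ θ₂ : ℝ) (hθ₁ : θ₁ ∈ Set.Ico 0 (2 * Real.pi)) (hθ₂ : θ₂ ∈ Set.Ico 0 (2 * Real.pi))
    (ψ : ℝ → ℝ → ℝ → (Fin 4 → ℝ) → ℂ)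
    -- `Ψ` is C¹ on `[0,∞) × closure S₁`
    (hreg : ∀ ς₀ ∈ ({-1, 1} : Set ℝ), ∀ ς₁ ∈ ({-1, 1} : Set ℝ), ∀ ς₂ ∈ ({-1, 1} : Set ℝ),
      ContDiffOn ℝ 1 (ψ ς₀ ς₁ ς₂) {x : Fin 4 → ℝ | 0 ≤ x 0 ∧ sp x ∈ closure S1})
    -- equal-time evolution equations on `(0,∞) × S₁`
    (heq : ∀ ς₀ ∈ ({-1, 1} : Set ℝ), ∀ ς₁ ∈ ({-1, 1} : Set ℝ), ∀ ς₂ ∈ ({-1, 1} : Set ℝ),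
      ∀ x : Fin 4 → ℝ, 0 < x 0 → sp x ∈ S1 →
        pdC 0 (ψ ς₀ ς₁ ς₂) x - (ς₀ : ℂ) * pdC 1 (ψ ς₀ ς₁ ς₂) x
          - (ς₁ : ℂ) * pdC 2 (ψ ς₀ ς₁ ς₂) x - (ς₂ : ℂ) * pdC 3 (ψ ς₀ ς₁ ς₂) x
          + Complex.I * (ω : ℂ) * ψ ς₀ (-ς₁) ς₂ x
          + Complex.I * (ω : ℂ) * ψ ς₀ ς₁ (-ς₂) x = 0)
    -- exact boundary condition on `C₁ = {s_e1 = s_ph < s_e2}`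
    (hbc1 : ∀ ς₂ ∈ ({-1, 1} : Set ℝ), ∀ t : ℝ, 0 ≤ t → ∀ r b : ℝ, r < b →
      ψ (-1) 1 ς₂ ![t, r, r, b]
        = Complex.exp (θ₁ * Complex.I) * ψ 1 (-1) ς₂ ![t, r, r, b])
    -- exact boundary condition on `C₂ = {s_e1 < s_ph = s_e2}`
    (hbc2 : ∀ ς₁ ∈ ({-1, 1} : Set ℝ), ∀ t : ℝ, 0 ≤ t → ∀ a r : ℝ, a < r →
      ψ 1 ς₁ (-1) ![t, r, a, r]
        = Complex.exp (θ₂ * Complex.I) * ψ (-1) ς₁ 1 ![t, r, a, r])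
    -- compact spatial support on every bounded time interval
    (hsupp : ∀ T : ℝ, ∃ K : Set (Fin 3 → ℝ), IsCompact K ∧
      ∀ ς₀ ∈ ({-1, 1} : Set ℝ), ∀ ς₁ ∈ ({-1, 1} : Set ℝ), ∀ ς₂ ∈ ({-1, 1} : Set ℝ),
        ∀ t ∈ Set.Icc 0 T, ∀ p : Fin 3 → ℝ, p ∉ K → ψ ς₀ ς₁ ς₂ (pt t p) = 0) :
    ∀ t : ℝ, 0 ≤ t →
      (∫ p in S1, totD ψ t p) = ∫ p in S1, totD ψ 0 p := by
  intro t ht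
  classical
  obtain ⟨K, hKc, hK0⟩ := hsupp t
  obtain ⟨R0, hR0⟩ := hKc.isBounded.subset_closedBall 0
  set R : ℝ := max R0 0 with hRdef
  have hR : (0:ℝ) ≤ R := le_max_right _ _
  have hKR : ∀ p ∈ K, ∀ i, |p i| ≤ R := by
    intro p hp i
    have h1 : ‖p‖ ≤ R0 := by
      simpa [Metric.mem_closedBall, dist_zero_right] using hR0 hp
    have h2 := norm_le_pi_norm p i
    simp only [Real.norm_eq_abs] at h2
    exact h2.trans (h1.trans (le_max_left _ _))
  set A : ℝ := 2 * R + 1 with hAdef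
  have hA : 0 < A := by positivity
  set a : Fin 4 → ℝ := ![0, 0, 0, -A] with ha
  set b : Fin 4 → ℝ := ![t, A, A, A] with hb
  have hab : a ≤ b := by
    intro i; fin_cases i <;> simp [ha, hb] <;> linarith
  set Reg : Set (Fin 4 → ℝ) := {x | 0 ≤ x 0 ∧ sp x ∈ closure S1} with hRegdef
  set O : Set (Fin 4 → ℝ) := {x | 0 < x 0 ∧ sp x ∈ S1} with hOdef
  have hS1open : IsOpen S1 :=
    (isOpen_lt (continuous_apply 1) (continuous_apply 0)).inter
      (isOpen_lt (continuous_apply 0) (continuous_apply 2))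
  have hspcont : Continuous sp := by
    apply continuous_pi
    intro i
    fin_cases i <;> simp [sp] <;> exact continuous_apply _
  have hOopen : IsOpen O :=
    (isOpen_lt continuous_const (continuous_apply 0)).inter (hS1open.preimage hspcont)
  have hOReg : O ⊆ Reg := fun x hx => ⟨le_of_lt hx.1, subset_closure hx.2⟩
  have hsp4 : ∀ z : Fin 4 → ℝ, sp ![z 0, z 3, z 3 - z 1, z 3 + z 2]
      = ![z 3, z 3 - z 1, z 3 + z 2] := by
    intro z; funext j; fin_cases j <;> simp [sp]
  have hmaps : ∀ z ∈ Set.Icc a b, Phi z ∈ Reg := by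
    rintro z ⟨hza, hzb⟩
    have h1 : 0 ≤ z 1 := by have := hza 1; simpa [ha] using this
    have h2 : 0 ≤ z 2 := by have := hza 2; simpa [ha] using this
    have h0 : 0 ≤ z 0 := by have := hza 0; simpa [ha] using this
    refine ⟨?_, ?_⟩
    · rw [Phi_apply]; simpa using h0
    · rw [Phi_apply, hsp4]
      exact mem_closure_S1 (by simp; linarith) (by simp; linarith)
  have hPhiIoo : ∀ x ∈ Set.pi Set.univ (fun i => Set.Ioo (a i) (b i)), Phi x ∈ O := by
    intro x hx
    have h0 : 0 < x 0 := by have := (hx 0 trivial).1; simpa [ha] using this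
    have h1 : 0 < x 1 := by have := (hx 1 trivial).1; simpa [ha] using this
    have h2 : 0 < x 2 := by have := (hx 2 trivial).1; simpa [ha] using this
    refine ⟨?_, ?_⟩
    · rw [Phi_apply]; simpa using h0
    · rw [Phi_apply, hsp4]
      refine ⟨by simp; linarith, by simp; linarith⟩
  have hdiffO : ∀ x : Fin 4 → ℝ, Phi x ∈ O →
      ∀ ς₀ ∈ ({-1,1} : Set ℝ), ∀ ς₁ ∈ ({-1,1} : Set ℝ), ∀ ς₂ ∈ ({-1,1} : Set ℝ),
        DifferentiableAt ℝ (ψ ς₀ ς₁ ς₂) (Phi x) := by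
    intro x hx ς₀ h₀ ς₁ h₁ ς₂ h₂
    have hnb : Reg ∈ nhds (Phi x) := Filter.mem_of_superset (hOopen.mem_nhds hx) hOReg
    exact ((hreg ς₀ h₀ ς₁ h₁ ς₂ h₂).contDiffAt hnb).differentiableAt one_ne_zero
  -- continuity of the flux field on the box
  have Hc : ContinuousOn (Fv ψ) (Set.Icc a b) := by
    apply continuousOn_pi.2
    intro i
    apply continuousOn_finset_sum
    intro ς₀ h₀
    apply continuousOn_finset_sum
    intro ς₁ h₁
    apply continuousOn_finset_sum
    intro ς₂ h₂
    apply ContinuousOn.mul continuousOn_const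
    apply ContinuousOn.pow
    apply ContinuousOn.norm
    exact ((hreg ς₀ (mem_signsS h₀) ς₁ (mem_signsS h₁) ς₂ (mem_signsS h₂)).continuousOn).comp
      (Phi.continuous.continuousOn) hmaps
  have Hd : ∀ x ∈ (Set.pi Set.univ fun i => Set.Ioo (a i) (b i)) \ (∅ : Set (Fin 4 → ℝ)),
      HasFDerivAt (Fv ψ) (Fd ψ x) x := fun x hx =>
    hasFDerivAt_Fv ψ x (hdiffO x (hPhiIoo x hx.1))
  have hdivzero : ∀ x ∈ Set.pi Set.univ (fun i => Set.Ioo (a i) (b i)),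
      ∑ i : Fin 4, Fd ψ x (Pi.single i 1) i = 0 := by
    intro x hx
    apply divg_zero ψ ω x
    intro ς₀ h₀ ς₁ h₁ ς₂ h₂
    have hmem := hPhiIoo x hx
    exact heq ς₀ h₀ ς₁ h₁ ς₂ h₂ (Phi x) hmem.1 hmem.2
  have haeIoo : ∀ᵐ x ∂(volume.restrict (Set.Icc a b)),
      x ∈ Set.pi Set.univ (fun i => Set.Ioo (a i) (b i)) := by
    have hpieq := (MeasureTheory.Measure.univ_pi_Ioo_ae_eq_Icc
      (μ := fun _ : Fin 4 => (volume : Measure ℝ)) (f := a) (g := b))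
    have hnull : volume (Set.Icc a b \ Set.pi Set.univ (fun i => Set.Ioo (a i) (b i))) = 0 := by
      rw [volume_pi]
      exact (Filter.eventuallyEq_set.1 hpieq.symm).symm ▸ (MeasureTheory.ae_eq_set.1 hpieq.symm).1
    rw [ae_restrict_iff' measurableSet_Icc]
    have hsub : {x : Fin 4 → ℝ | ¬ (x ∈ Set.Icc a b →
        x ∈ Set.pi Set.univ (fun i => Set.Ioo (a i) (b i)))} ⊆
        Set.Icc a b \ Set.pi Set.univ (fun i => Set.Ioo (a i) (b i)) := by
      intro x hx
      simp only [Set.mem_setOf_eq] at hx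
      push_neg at hx
      exact ⟨hx.1, hx.2⟩
    exact (MeasureTheory.ae_iff).2 (measure_mono_null hsub hnull)
  have haeZero : (fun x => ∑ i : Fin 4, Fd ψ x (Pi.single i 1) i)
      =ᵐ[volume.restrict (Set.Icc a b)] 0 :=
    haeIoo.mono fun x hx => hdivzero x hx
  have Hi : IntegrableOn (fun x => ∑ i : Fin 4, Fd ψ x (Pi.single i 1) i) (Set.Icc a b) volume :=
    (integrable_zero _ _ _).congr haeZero.symm
  have hdiv := MeasureTheory.integral_divergence_of_hasFDerivAt_off_countable a b hab
    (Fv ψ) (Fd ψ) ∅ Set.countable_empty Hc Hd Hi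
  have hLHS : (∫ x in Set.Icc a b, ∑ i : Fin 4, Fd ψ x (Pi.single i 1) i) = 0 := by
    rw [integral_congr_ae haeZero]; simp
  rw [hLHS, Fin.sum_univ_four] at hdiv
  set box3 : Set (Fin 3 → ℝ) := Set.Icc ![0,0,-A] ![A,A,A] with hbox3
  -- face auxiliary computations
  have hsa0 : a ∘ Fin.succAbove 0 = (![0,0,-A] : Fin 3 → ℝ) := by
    rw [ha]; funext j; fin_cases j <;> rfl
  have hsb0 : b ∘ Fin.succAbove 0 = (![A,A,A] : Fin 3 → ℝ) := by
    rw [hb]; funext j; fin_cases j <;> rfl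
  have hsa1 : a ∘ Fin.succAbove 1 = (![0,0,-A] : Fin 3 → ℝ) := by
    rw [ha]; funext j; fin_cases j <;> rfl
  have hsb1 : b ∘ Fin.succAbove 1 = (![t,A,A] : Fin 3 → ℝ) := by
    rw [hb]; funext j; fin_cases j <;> rfl
  have hsa2 : a ∘ Fin.succAbove 2 = (![0,0,-A] : Fin 3 → ℝ) := by
    rw [ha]; funext j; fin_cases j <;> rfl
  have hsb2 : b ∘ Fin.succAbove 2 = (![t,A,A] : Fin 3 → ℝ) := by
    rw [hb]; funext j; fin_cases j <;> rfl
  have hsa3 : a ∘ Fin.succAbove 3 = (![0,0,0] : Fin 3 → ℝ) := by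
    rw [ha]; funext j; fin_cases j <;> rfl
  have hsb3 : b ∘ Fin.succAbove 3 = (![t,A,A] : Fin 3 → ℝ) := by
    rw [hb]; funext j; fin_cases j <;> rfl
  have haeq : ∀ j : Fin 3, ∀ᵐ y : Fin 3 → ℝ, y j ≠ 0 := by
    intro j
    have h := MeasureTheory.Measure.ae_eval_ne (μ := fun _ : Fin 3 => (volume : Measure ℝ)) j 0
    rw [← MeasureTheory.volume_pi] at h; exact h
  -- face 0 (time faces)
  have hf0f : (∫ x : Fin 3 → ℝ in Set.Icc (a ∘ Fin.succAbove 0) (b ∘ Fin.succAbove 0),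
      Fv ψ (Fin.insertNth 0 (b 0) x) 0) = ∫ y in box3, totD ψ t (Lcov y) := by
    rw [hsa0, hsb0, show b 0 = t from by simp [hb]]
    simp only [Fv_face0, hbox3]
  have hf0b : (∫ x : Fin 3 → ℝ in Set.Icc (a ∘ Fin.succAbove 0) (b ∘ Fin.succAbove 0),
      Fv ψ (Fin.insertNth 0 (a 0) x) 0) = ∫ y in box3, totD ψ 0 (Lcov y) := by
    rw [hsa0, hsb0, show a 0 = (0:ℝ) from by simp [ha]]
    simp only [Fv_face0, hbox3]
  -- face 1 front : u = A, zero by support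
  have hf1f : (∫ x : Fin 3 → ℝ in Set.Icc (a ∘ Fin.succAbove 1) (b ∘ Fin.succAbove 1),
      Fv ψ (Fin.insertNth 1 (b 1) x) 1) = 0 := by
    rw [hsa1, hsb1, show b 1 = A from by simp [hb]]
    rw [setIntegral_congr_fun measurableSet_Icc (g := fun _ => (0:ℝ)) ?_]
    · simp
    intro y hy
    obtain ⟨hyl, hyu⟩ := hy
    have hy0 : 0 ≤ y 0 := by have := hyl 0; simpa using this
    have hy0' : y 0 ≤ t := by have := hyu 0; simpa using this
    have hnotK : Lcov ![A, y 1, y 2] ∉ K := by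
      intro hk
      have h0 := hKR _ hk 0
      have h1' := hKR _ hk 1
      rw [Lcov_apply] at h0 h1'
      simp at h0 h1'
      rw [abs_le] at h0 h1'
      linarith [h0.2, h1'.1]
    simp only [Fv, PhiIns1]
    apply Finset.sum_eq_zero; intro ς₀ h₀
    apply Finset.sum_eq_zero; intro ς₁ h₁
    apply Finset.sum_eq_zero; intro ς₂ h₂
    rw [hK0 ς₀ (mem_signsS h₀) ς₁ (mem_signsS h₁) ς₂ (mem_signsS h₂) (y 0) ⟨hy0, hy0'⟩ _ hnotK]
    simp
  -- face 2 front : v = A, zero by support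
  have hf2f : (∫ x : Fin 3 → ℝ in Set.Icc (a ∘ Fin.succAbove 2) (b ∘ Fin.succAbove 2),
      Fv ψ (Fin.insertNth 2 (b 2) x) 2) = 0 := by
    rw [hsa2, hsb2, show b 2 = A from by simp [hb]]
    rw [setIntegral_congr_fun measurableSet_Icc (g := fun _ => (0:ℝ)) ?_]
    · simp
    intro y hy
    obtain ⟨hyl, hyu⟩ := hy
    have hy0 : 0 ≤ y 0 := by have := hyl 0; simpa using this
    have hy0' : y 0 ≤ t := by have := hyu 0; simpa using this
    have hnotK : Lcov ![y 1, A, y 2] ∉ K := by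
      intro hk
      have h0 := hKR _ hk 0
      have h2' := hKR _ hk 2
      rw [Lcov_apply] at h0 h2'
      simp at h0 h2'
      rw [abs_le] at h0 h2'
      linarith [h0.1, h2'.2]
    simp only [Fv, PhiIns2]
    apply Finset.sum_eq_zero; intro ς₀ h₀
    apply Finset.sum_eq_zero; intro ς₁ h₁
    apply Finset.sum_eq_zero; intro ς₂ h₂
    rw [hK0 ς₀ (mem_signsS h₀) ς₁ (mem_signsS h₁) ς₂ (mem_signsS h₂) (y 0) ⟨hy0, hy0'⟩ _ hnotK]
    simp
  -- face 3 : w = ±A, zero by support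
  have hf3f : (∫ x : Fin 3 → ℝ in Set.Icc (a ∘ Fin.succAbove 3) (b ∘ Fin.succAbove 3),
      Fv ψ (Fin.insertNth 3 (b 3) x) 3) = 0 := by
    rw [hsa3, hsb3, show b 3 = A from by simp [hb]]
    rw [setIntegral_congr_fun measurableSet_Icc (g := fun _ => (0:ℝ)) ?_]
    · simp
    intro y hy
    obtain ⟨hyl, hyu⟩ := hy
    have hy0 : 0 ≤ y 0 := by have := hyl 0; simpa using this
    have hy0' : y 0 ≤ t := by have := hyu 0; simpa using this
    have hnotK : Lcov ![y 1, y 2, A] ∉ K := by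
      intro hk
      have h0 := hKR _ hk 0
      rw [Lcov_apply] at h0
      simp at h0
      rw [abs_le] at h0
      linarith [h0.2]
    simp only [Fv, PhiIns3]
    apply Finset.sum_eq_zero; intro ς₀ h₀
    apply Finset.sum_eq_zero; intro ς₁ h₁
    apply Finset.sum_eq_zero; intro ς₂ h₂
    rw [hK0 ς₀ (mem_signsS h₀) ς₁ (mem_signsS h₁) ς₂ (mem_signsS h₂) (y 0) ⟨hy0, hy0'⟩ _ hnotK]
    simp
  have hf3b : (∫ x : Fin 3 → ℝ in Set.Icc (a ∘ Fin.succAbove 3) (b ∘ Fin.succAbove 3),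
      Fv ψ (Fin.insertNth 3 (a 3) x) 3) = 0 := by
    rw [hsa3, hsb3, show a 3 = -A from by simp [ha]]
    rw [setIntegral_congr_fun measurableSet_Icc (g := fun _ => (0:ℝ)) ?_]
    · simp
    intro y hy
    obtain ⟨hyl, hyu⟩ := hy
    have hy0 : 0 ≤ y 0 := by have := hyl 0; simpa using this
    have hy0' : y 0 ≤ t := by have := hyu 0; simpa using this
    have hnotK : Lcov ![y 1, y 2, -A] ∉ K := by
      intro hk
      have h0 := hKR _ hk 0
      rw [Lcov_apply] at h0
      simp at h0
      rw [abs_le] at h0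
      linarith [h0.1]
    simp only [Fv, PhiIns3]
    apply Finset.sum_eq_zero; intro ς₀ h₀
    apply Finset.sum_eq_zero; intro ς₁ h₁
    apply Finset.sum_eq_zero; intro ς₂ h₂
    rw [hK0 ς₀ (mem_signsS h₀) ς₁ (mem_signsS h₁) ς₂ (mem_signsS h₂) (y 0) ⟨hy0, hy0'⟩ _ hnotK]
    simp
  -- face 1 back : u = 0, vanishes by the boundary condition on C₁
  have hf1b : (∫ x : Fin 3 → ℝ in Set.Icc (a ∘ Fin.succAbove 1) (b ∘ Fin.succAbove 1),
      Fv ψ (Fin.insertNth 1 (a 1) x) 1) = 0 := by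
    rw [hsa1, hsb1, show a 1 = (0:ℝ) from by simp [ha]]
    have hz : ∫ y in Set.Icc (![0,0,-A] : Fin 3 → ℝ) ![t,A,A], Fv ψ (Fin.insertNth 1 0 y) 1
        = ∫ y in Set.Icc (![0,0,-A] : Fin 3 → ℝ) ![t,A,A], (0:ℝ) := by
      apply setIntegral_congr_ae measurableSet_Icc
      filter_upwards [haeq 1] with y hy1 hyIcc
      obtain ⟨hyl, hyu⟩ := hyIcc
      have hy0 : 0 ≤ y 0 := by have := hyl 0; simpa using this
      have hv : 0 < y 1 := lt_of_le_of_ne (by have := hyl 1; simpa using this) (Ne.symm hy1)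
      have hpt : pt (y 0) (Lcov ![0, y 1, y 2]) = ![y 0, y 2, y 2, y 2 + y 1] := by
        rw [Lcov_apply]; funext j; fin_cases j <;> simp [pt]
      have e1 := hbc1 (-1) (by norm_num) (y 0) hy0 (y 2) (y 2 + y 1) (by linarith)
      have e2 := hbc1 1 (by norm_num) (y 0) hy0 (y 2) (y 2 + y 1) (by linarith)
      have hnorm : ‖Complex.exp ((θ₁ : ℂ) * Complex.I)‖ = 1 := by
        simpa using Complex.norm_exp_ofReal_mul_I θ₁
      simp only [Fv, PhiIns1, sum_signs, cf1, hpt]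
      rw [e1, e2]
      simp [norm_mul, hnorm]
      ring
    rw [hz]; simp
  -- face 2 back : v = 0, vanishes by the boundary condition on C₂
  have hf2b : (∫ x : Fin 3 → ℝ in Set.Icc (a ∘ Fin.succAbove 2) (b ∘ Fin.succAbove 2),
      Fv ψ (Fin.insertNth 2 (a 2) x) 2) = 0 := by
    rw [hsa2, hsb2, show a 2 = (0:ℝ) from by simp [ha]]
    have hz : ∫ y in Set.Icc (![0,0,-A] : Fin 3 → ℝ) ![t,A,A], Fv ψ (Fin.insertNth 2 0 y) 2
        = ∫ y in Set.Icc (![0,0,-A] : Fin 3 → ℝ) ![t,A,A], (0:ℝ) := by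
      apply setIntegral_congr_ae measurableSet_Icc
      filter_upwards [haeq 1] with y hy1 hyIcc
      obtain ⟨hyl, hyu⟩ := hyIcc
      have hy0 : 0 ≤ y 0 := by have := hyl 0; simpa using this
      have hv : 0 < y 1 := lt_of_le_of_ne (by have := hyl 1; simpa using this) (Ne.symm hy1)
      have hpt : pt (y 0) (Lcov ![y 1, 0, y 2]) = ![y 0, y 2, y 2 - y 1, y 2] := by
        rw [Lcov_apply]; funext j; fin_cases j <;> simp [pt]
      have e1 := hbc2 (-1) (by norm_num) (y 0) hy0 (y 2 - y 1) (y 2) (by linarith)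
      have e2 := hbc2 1 (by norm_num) (y 0) hy0 (y 2 - y 1) (y 2) (by linarith)
      have hnorm : ‖Complex.exp ((θ₂ : ℂ) * Complex.I)‖ = 1 := by
        simpa using Complex.norm_exp_ofReal_mul_I θ₂
      simp only [Fv, PhiIns2, sum_signs, cf2, hpt]
      rw [e1, e2]
      simp [norm_mul, hnorm]
      ring
    rw [hz]; simp
  rw [hf0f, hf0b, hf1f, hf1b, hf2f, hf2b, hf3f, hf3b] at hdiv
  have hbox : (∫ y in box3, totD ψ t (Lcov y)) = ∫ y in box3, totD ψ 0 (Lcov y) := by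
    linarith
  -- glue : the integral over S1 equals the integral over box3 in the new coordinates
  have hglue : ∀ s : ℝ, s ∈ Set.Icc 0 t →
      (∫ p in S1, totD ψ s p) = ∫ y in box3, totD ψ s (Lcov y) := by
    intro s hs
    rw [← Lmp.setIntegral_preimage_emb Lemb (fun p => totD ψ s p) S1]
    have hQ : (Lcov : (Fin 3 → ℝ) → (Fin 3 → ℝ)) ⁻¹' S1
        = {q : Fin 3 → ℝ | 0 < q 0 ∧ 0 < q 1} := by
      ext q
      simp only [Set.mem_preimage, S1, Set.mem_setOf_eq, Lcov_apply]
      simp only [Matrix.cons_val_zero, Matrix.cons_val_one, Matrix.head_cons,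
        Matrix.cons_val_two, Matrix.tail_cons]
      constructor <;> intro h <;> exact ⟨by linarith [h.1], by linarith [h.2]⟩
    rw [hQ]
    have hQmeas : MeasurableSet {q : Fin 3 → ℝ | 0 < q 0 ∧ 0 < q 1} :=
      ((isOpen_lt continuous_const (continuous_apply 0)).inter
        (isOpen_lt continuous_const (continuous_apply 1))).measurableSet
    rw [← integral_indicator hQmeas, ← integral_indicator (measurableSet_Icc (a := (![0,0,-A] : Fin 3 → ℝ)) (b := ![A,A,A]))]
    apply integral_congr_ae
    filter_upwards [haeq 0, haeq 1] with q hq0 hq1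
    by_cases hQm : q ∈ {q : Fin 3 → ℝ | 0 < q 0 ∧ 0 < q 1}
    · by_cases hB : q ∈ box3
      · rw [Set.indicator_of_mem hQm, Set.indicator_of_mem hB]
      · rw [Set.indicator_of_mem hQm, Set.indicator_of_notMem hB]
        have hnotK : Lcov q ∉ K := by
          intro hk
          apply hB
          have h0 := hKR _ hk 0
          have h1 := hKR _ hk 1
          have h2 := hKR _ hk 2
          rw [Lcov_apply] at h0 h1 h2
          simp only [Matrix.cons_val_zero, Matrix.cons_val_one, Matrix.head_cons,
            Matrix.cons_val_two, Matrix.tail_cons] at h0 h1 h2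
          rw [abs_le] at h0 h1 h2
          refine ⟨?_, ?_⟩ <;> intro i <;> fin_cases i <;> simp <;>
            first
              | linarith [hQm.1, hQm.2, h0.1, h0.2, h1.1, h1.2, h2.1, h2.2]
              | linarith [hQm.1, hQm.2]
        simp only [totD]
        apply Finset.sum_eq_zero; intro ς₀ h₀
        apply Finset.sum_eq_zero; intro ς₁ h₁
        apply Finset.sum_eq_zero; intro ς₂ h₂
        rw [hK0 ς₀ (by simpa using h₀) ς₁ (by simpa using h₁) ς₂ (by simpa using h₂) s hs _ hnotK]
        simp
    · by_cases hB : q ∈ box3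
      · exfalso
        obtain ⟨hBl, hBu⟩ := hB
        have hb0 : 0 ≤ q 0 := by have := hBl 0; simpa using this
        have hb1 : 0 ≤ q 1 := by have := hBl 1; simpa using this
        simp only [Set.mem_setOf_eq, not_and_or, not_lt] at hQm
        rcases hQm with h | h
        · exact hq0 (le_antisymm h hb0)
        · exact hq1 (le_antisymm h hb1)
      · rw [Set.indicator_of_notMem hQm, Set.indicator_of_notMem hB]
  calc (∫ p in S1, totD ψ t p) = ∫ y in box3, totD ψ t (Lcov y) :=
        hglue t ⟨ht, le_refl t⟩
    _ = ∫ y in box3, totD ψ 0 (Lcov y) := hbox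
    _ = ∫ p in S1, totD ψ 0 p := (hglue 0 ⟨le_refl 0, ht⟩).symm
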